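/- arXiv:1803.00936 — 2 statements merged into one kernel-verified Lean document; each statement's English description precedes it below -/
import Mathlib

section
/- Let D be an α-derivation of a hom-Lie-Rinehart algebra (L, α_L) over (A, φ) with symbol σ_D. Then the map uce^φ_A(D): uce^φ_A L → uce^φ_A L defined by uce^φ_A(D)(a,x,y) = (σ_D(a), α_L(x), α_L(y)) + (φ(a), D(x), α_L(y)) + (φ(a), α_L(x), D(y)) is a well-defined α-derivation of the hom-Lie-Rinehart algebra (uce^φ_A L, α̃_L) with symbol σ_D, and uce^φ_A(D)(Ker(u_L)) ⊆ Ker(u_L). -/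
open TensorProduct Function Set

/-- A hom-Lie-Rinehart algebra structure over `(A, φ)` on the `A`-module `L`. -/
structure HLR (R A : Type) [CommRing R] [CommRing A] [Algebra R A]
    (φ : A →ₐ[R] A) (L : Type) [AddCommGroup L] [Module R L]
    [Module A L] [IsScalarTower R A L] : Type where
  bracket : L → L → L
  add_left : ∀ x y z, bracket (x + y) z = bracket x z + bracket y z
  add_right : ∀ x y z, bracket x (y + z) = bracket x y + bracket x z
  smul_left : ∀ (r : R) (x y : L), bracket (r • x) y = r • bracket x y
  smul_right : ∀ (r : R) (x y : L), bracket x (r • y) = r • bracket x y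
  skew : ∀ x y, bracket x y = - bracket y x
  alpha : L → L
  alpha_add : ∀ x y, alpha (x + y) = alpha x + alpha y
  alpha_smulR : ∀ (r : R) (x : L), alpha (r • x) = r • alpha x
  rho : L → A → A
  rho_add_left : ∀ x y a, rho (x + y) a = rho x a + rho y a
  rho_smulR_left : ∀ (r : R) (x : L) (a : A), rho (r • x) a = r • rho x a
  rho_add_right : ∀ (x : L) (a b : A), rho x (a + b) = rho x a + rho x b
  rho_smulR_right : ∀ (x : L) (r : R) (a : A), rho x (r • a) = r • rho x a
  rho_deriv : ∀ (x : L) (a b : A), rho x (a * b) = φ a * rho x b + φ b * rho x a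
  alpha_bracket : ∀ x y, alpha (bracket x y) = bracket (alpha x) (alpha y)
  hom_jacobi : ∀ x y z, bracket (alpha x) (bracket y z)
      + bracket (alpha y) (bracket z x) + bracket (alpha z) (bracket x y) = 0
  alpha_smulA : ∀ (a : A) (x : L), alpha (a • x) = φ a • alpha x
  rho_alpha : ∀ (x : L) (a : A), rho (alpha x) (φ a) = φ (rho x a)
  rho_bracket : ∀ (x y : L) (a : A), rho (bracket x y) (φ a)
      = rho (alpha x) (rho y a) - rho (alpha y) (rho x a)
  rho_smulA : ∀ (a : A) (x : L) (b : A), rho (a • x) b = φ a * rho x b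
  leibniz : ∀ (x : L) (a : A) (y : L),
      bracket x (a • y) = φ a • bracket x y + rho x a • alpha y

section Defs

variable {R A : Type} [CommRing R] [CommRing A] [Algebra R A] {φ : A →ₐ[R] A}

/-- Homomorphism of hom-Lie-Rinehart algebras over `(A, φ)`: an `A`-linear map
preserving brackets, the twist maps and the anchors. -/
def IsHLRHom {K L : Type}
    [AddCommGroup K] [Module R K] [Module A K] [IsScalarTower R A K]
    [AddCommGroup L] [Module R L] [Module A L] [IsScalarTower R A L]
    (SK : HLR R A φ K) (SL : HLR R A φ L) (f : K → L) : Prop :=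
  (∀ x y, f (x + y) = f x + f y) ∧
  (∀ (a : A) (x : K), f (a • x) = a • f x) ∧
  (∀ x y, f (SK.bracket x y) = SL.bracket (f x) (f y)) ∧
  (∀ x, f (SK.alpha x) = SL.alpha (f x)) ∧
  (∀ (x : K) (a : A), SL.rho (f x) a = SK.rho x a)

/-- The center `Z_A(L)` of a hom-Lie-Rinehart algebra. -/
def HLR.center {L : Type}
    [AddCommGroup L] [Module R L] [Module A L] [IsScalarTower R A L]
    (S : HLR R A φ L) : Set L :=
  {x | ∀ (a : A) (z : L),
    S.bracket (a • x) z = 0 ∧ S.bracket (a • S.alpha x) z = 0 ∧ S.rho x a = 0}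

/-- `(M, i) → (K, σ)` is a central extension of `L`. -/
def IsCentralExt {M K L : Type}
    [AddCommGroup M] [Module R M] [Module A M] [IsScalarTower R A M]
    [AddCommGroup K] [Module R K] [Module A K] [IsScalarTower R A K]
    [AddCommGroup L] [Module R L] [Module A L] [IsScalarTower R A L]
    (SM : HLR R A φ M) (SK : HLR R A φ K) (SL : HLR R A φ L)
    (i : M → K) (σ : K → L) : Prop :=
  IsHLRHom SM SK i ∧ IsHLRHom SK SL σ ∧ Function.Injective i ∧
  Function.Surjective σ ∧ Set.range i = {k | σ k = 0} ∧
  {k | σ k = 0} ⊆ SK.center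

/-- `(M, i) → (K, σ)` is an `α`-central extension of `L`. -/
def IsAlphaCentralExt {M K L : Type}
    [AddCommGroup M] [Module R M] [Module A M] [IsScalarTower R A M]
    [AddCommGroup K] [Module R K] [Module A K] [IsScalarTower R A K]
    [AddCommGroup L] [Module R L] [Module A L] [IsScalarTower R A L]
    (SM : HLR R A φ M) (SK : HLR R A φ K) (SL : HLR R A φ L)
    (i : M → K) (σ : K → L) : Prop :=
  IsHLRHom SM SK i ∧ IsHLRHom SK SL σ ∧ Function.Injective i ∧
  Function.Surjective σ ∧ Set.range i = {k | σ k = 0} ∧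
  (∀ m : M, i (SM.alpha m) ∈ SK.center)

/-- A hom-Lie-Rinehart algebra is perfect if `L = {L, L}`, the `A`-submodule
generated by all brackets. -/
def HLR.IsPerfect {L : Type}
    [AddCommGroup L] [Module R L] [Module A L] [IsScalarTower R A L]
    (S : HLR R A φ L) : Prop :=
  Submodule.span A {z : L | ∃ x y, z = S.bracket x y} = ⊤

/-- A hom-Lie-Rinehart algebra is `α`-perfect if `L = {α_L(L), α_L(L)}`. -/
def HLR.IsAlphaPerfect {L : Type}
    [AddCommGroup L] [Module R L] [Module A L] [IsScalarTower R A L]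
    (S : HLR R A φ L) : Prop :=
  Submodule.span A {z : L | ∃ x y, z = S.bracket (S.alpha x) (S.alpha y)} = ⊤

/-- Universal central extension. -/
def IsUniversalCentralExt {M K L : Type}
    [AddCommGroup M] [Module R M] [Module A M] [IsScalarTower R A M]
    [AddCommGroup K] [Module R K] [Module A K] [IsScalarTower R A K]
    [AddCommGroup L] [Module R L] [Module A L] [IsScalarTower R A L]
    (SM : HLR R A φ M) (SK : HLR R A φ K) (SL : HLR R A φ L)
    (i : M → K) (σ : K → L) : Prop :=
  IsCentralExt SM SK SL i σ ∧
  ∀ (M' L' : Type)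
    [AddCommGroup M'] [Module R M'] [Module A M'] [IsScalarTower R A M']
    [AddCommGroup L'] [Module R L'] [Module A L'] [IsScalarTower R A L']
    (SM' : HLR R A φ M') (SL' : HLR R A φ L') (j : M' → L') (τ : L' → L),
    IsCentralExt SM' SL' SL j τ →
    ∃! h : K → L', IsHLRHom SK SL' h ∧ ∀ x, τ (h x) = σ x

/-- Universal `α`-central extension. -/
def IsUniversalAlphaCentralExt {M K L : Type}
    [AddCommGroup M] [Module R M] [Module A M] [IsScalarTower R A M]
    [AddCommGroup K] [Module R K] [Module A K] [IsScalarTower R A K]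
    [AddCommGroup L] [Module R L] [Module A L] [IsScalarTower R A L]
    (SM : HLR R A φ M) (SK : HLR R A φ K) (SL : HLR R A φ L)
    (i : M → K) (σ : K → L) : Prop :=
  IsCentralExt SM SK SL i σ ∧
  ∀ (M' L' : Type)
    [AddCommGroup M'] [Module R M'] [Module A M'] [IsScalarTower R A M']
    [AddCommGroup L'] [Module R L'] [Module A L'] [IsScalarTower R A L']
    (SM' : HLR R A φ M') (SL' : HLR R A φ L') (j : M' → L') (τ : L' → L),
    IsAlphaCentralExt SM' SL' SL j τ →
    ∃! h : K → L', IsHLRHom SK SL' h ∧ ∀ x, τ (h x) = σ x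

end Defs

section UceDefs

variable {R A : Type} [CommRing R] [CommRing A] [Algebra R A] (φ : A →ₐ[R] A)
variable {L : Type} [AddCommGroup L] [Module R L] [Module A L] [IsScalarTower R A L]

/-- The `A`-submodule `M^φ_A L` of `A ⊗ L ⊗ L` of defining relations of `uce^φ_A L`. -/
def uceRel (S : HLR R A φ L) : Submodule A (A ⊗[R] (L ⊗[R] L)) :=
  Submodule.span A
    ({t | ∃ (a : A) (x : L), t = a ⊗ₜ[R] (x ⊗ₜ[R] x)} ∪
     {t | ∃ (a : A) (x y : L), t = a ⊗ₜ[R] (x ⊗ₜ[R] y) + a ⊗ₜ[R] (y ⊗ₜ[R] x)} ∪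
     {t | ∃ (a : A) (x y z : L), t =
        a ⊗ₜ[R] (S.alpha x ⊗ₜ[R] S.bracket y z)
          + a ⊗ₜ[R] (S.alpha y ⊗ₜ[R] S.bracket z x)
          + a ⊗ₜ[R] (S.alpha z ⊗ₜ[R] S.bracket x y)} ∪
     {t | ∃ (a : A) (x y x' y' : L), t =
        φ a ⊗ₜ[R] (S.bracket x y ⊗ₜ[R] S.bracket x' y')
          + S.rho (S.bracket x y) a ⊗ₜ[R] (S.alpha x' ⊗ₜ[R] S.alpha y')
          - (1 : A) ⊗ₜ[R] (S.bracket x y ⊗ₜ[R] (a • S.bracket x' y'))})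

/-- The underlying `A`-module of `uce^φ_A L`. -/
abbrev UCE (S : HLR R A φ L) : Type := (A ⊗[R] (L ⊗[R] L)) ⧸ uceRel φ S

/-- The coset `(a, x, y)` in `uce^φ_A L`. -/
noncomputable def uceMk (S : HLR R A φ L) (a : A) (x y : L) : UCE φ S :=
  Submodule.Quotient.mk (a ⊗ₜ[R] (x ⊗ₜ[R] y))

/-- `U` is the hom-Lie-Rinehart structure of `uce^φ_A L`: its bracket, twist map and anchor
are given by the defining formulas on cosets. -/
def IsUceStructure (S : HLR R A φ L) (U : HLR R A φ (UCE φ S)) : Prop :=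
  (∀ (a₁ a₂ : A) (x₁ y₁ x₂ y₂ : L),
    U.bracket (uceMk φ S a₁ x₁ y₁) (uceMk φ S a₂ x₂ y₂) =
      uceMk φ S (φ (a₁ * a₂)) (S.bracket x₁ y₁) (S.bracket x₂ y₂)
      + uceMk φ S (φ a₁ * S.rho (S.bracket x₁ y₁) a₂) (S.alpha x₂) (S.alpha y₂)
      - uceMk φ S (φ a₂ * S.rho (S.bracket x₂ y₂) a₁) (S.alpha x₁) (S.alpha y₁)) ∧
  (∀ (a : A) (x y : L),
    U.alpha (uceMk φ S a x y) = uceMk φ S (φ a) (S.alpha x) (S.alpha y)) ∧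
  (∀ (a b : A) (x y : L),
    U.rho (uceMk φ S a x y) b = φ a * S.rho (S.bracket x y) b)

/-- `u` is the canonical map `u_L : uce^φ_A L → L`, `(a,x,y) ↦ a • [x,y]`. -/
def IsUceMap (S : HLR R A φ L) (u : UCE φ S → L) : Prop :=
  (∀ ξ η, u (ξ + η) = u ξ + u η) ∧
  (∀ (a : A) (ξ : UCE φ S), u (a • ξ) = a • u ξ) ∧
  (∀ (a : A) (x y : L), u (uceMk φ S a x y) = a • S.bracket x y)

end UceDefs

section MoreDefs

variable {R A : Type} [CommRing R] [CommRing A] [Algebra R A] (φ : A →ₐ[R] A)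

/-- `F` is the homomorphism `uce^φ_A(f)` induced by `f` on universal central extensions. -/
def IsUceFunctorMap {K L : Type}
    [AddCommGroup K] [Module R K] [Module A K] [IsScalarTower R A K]
    [AddCommGroup L] [Module R L] [Module A L] [IsScalarTower R A L]
    (SK : HLR R A φ K) (SL : HLR R A φ L)
    (UK : HLR R A φ (UCE φ SK)) (UL : HLR R A φ (UCE φ SL))
    (f : K → L) (F : UCE φ SK → UCE φ SL) : Prop :=
  IsHLRHom UK UL F ∧
  ∀ (a : A) (x y : K), F (uceMk φ SK a x y) = uceMk φ SL a (f x) (f y)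

/-- `D` is an `α`-derivation of `(L, α_L)` with symbol `σD`. -/
def IsAlphaDeriv {L : Type}
    [AddCommGroup L] [Module R L] [Module A L] [IsScalarTower R A L]
    (S : HLR R A φ L) (D : L → L) (σD : A → A) : Prop :=
  (∀ x y, D (x + y) = D x + D y) ∧
  (∀ (r : R) (x : L), D (r • x) = r • D x) ∧
  (∀ a b, σD (a + b) = σD a + σD b) ∧
  (∀ (r : R) (a : A), σD (r • a) = r • σD a) ∧
  (∀ a b, σD (a * b) = φ a * σD b + φ b * σD a) ∧
  (∀ x, D (S.alpha x) = S.alpha (D x)) ∧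
  (∀ x y, D (S.bracket x y) = S.bracket (D x) (S.alpha y) + S.bracket (S.alpha x) (D y)) ∧
  (∀ a, σD (φ a) = φ (σD a)) ∧
  (∀ (a : A) (x : L), D (a • x) = φ a • D x + σD a • S.alpha x) ∧
  (∀ (x : L) (a : A), σD (S.rho x a) = S.rho (S.alpha x) (σD a) + S.rho (D x) (φ a))

/-- A quasi hom-action of `(L, α_L)` on `(M, α_M)`. -/
def IsQuasiHomAction {L M : Type}
    [AddCommGroup L] [Module R L] [Module A L] [IsScalarTower R A L]
    [AddCommGroup M] [Module R M] [Module A M] [IsScalarTower R A M]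
    (SL : HLR R A φ L) (SM : HLR R A φ M) (act : L → M → M) : Prop :=
  (∀ (x : L) (a : A) (m : M),
      act x (a • m) = φ a • act x m + SL.rho x a • SM.alpha m) ∧
  (∀ (x y : L) (m : M),
      act (SL.bracket x y) (SM.alpha m)
        = act (SL.alpha x) (act y m) - act (SL.alpha y) (act x m)) ∧
  (∀ (x : L) (m n : M),
      act (SL.alpha x) (SM.bracket m n)
        = SM.bracket (act x m) (SM.alpha n) + SM.bracket (SM.alpha m) (act x n)) ∧
  (∀ (x : L) (m : M) (a : A),
      SM.rho (act x m) (φ a)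
        = SL.rho (SL.alpha x) (SM.rho m a) - SM.rho (SM.alpha m) (SL.rho x a)) ∧
  (∀ (x : L) (m : M), SM.alpha (act x m) = act (SL.alpha x) (SM.alpha m))

/-- Compatibility of two quasi hom-actions on each other. -/
def AreCompatibleActions {L M : Type}
    [AddCommGroup L] [Module R L] [Module A L] [IsScalarTower R A L]
    [AddCommGroup M] [Module R M] [Module A M] [IsScalarTower R A M]
    (SL : HLR R A φ L) (SM : HLR R A φ M)
    (actLM : L → M → M) (actML : M → L → L) : Prop :=
  (∀ (x : L) (m : M) (a : A), SM.rho (actLM x m) a = - SL.rho (actML m x) a) ∧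
  (∀ (m : M) (x : L) (n : M), actLM (actML m x) n = SM.bracket n (actLM x m)) ∧
  (∀ (x : L) (m : M) (y : L), actML (actLM x m) y = SL.bracket y (actML m x))

end MoreDefs

section StarDefs

variable {R A : Type} [CommRing R] [CommRing A] [Algebra R A] (φ : A →ₐ[R] A)
variable {L M : Type}
  [AddCommGroup L] [Module R L] [Module A L] [IsScalarTower R A L]
  [AddCommGroup M] [Module R M] [Module A M] [IsScalarTower R A M]

/-- The `A`-submodule of defining relations of the non-abelian tensor product `L ∗ M`,
inside the free `A`-module on the symbols `x ∗ m`. -/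
noncomputable def starRel (SL : HLR R A φ L) (SM : HLR R A φ M)
    (actLM : L → M → M) (actML : M → L → L) : Submodule A ((L × M) →₀ A) :=
  Submodule.span A
    ({t | ∃ (x y : L) (m : M), t =
        Finsupp.single (x + y, m) (1 : A) - Finsupp.single (x, m) 1
          - Finsupp.single (y, m) 1} ∪
     {t | ∃ (r : R) (x : L) (m : M), t =
        Finsupp.single (r • x, m) (1 : A) - r • Finsupp.single (x, m) (1 : A)} ∪
     {t | ∃ (x : L) (m n : M), t =
        Finsupp.single (x, m + n) (1 : A) - Finsupp.single (x, m) 1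
          - Finsupp.single (x, n) 1} ∪
     {t | ∃ (r : R) (x : L) (m : M), t =
        Finsupp.single (x, r • m) (1 : A) - r • Finsupp.single (x, m) (1 : A)} ∪
     {t | ∃ (x y : L) (m : M), t =
        Finsupp.single (SL.bracket x y, SM.alpha m) (1 : A)
          - Finsupp.single (SL.alpha x, actLM y m) 1
          + Finsupp.single (SL.alpha y, actLM x m) 1} ∪
     {t | ∃ (x : L) (m n : M), t =
        Finsupp.single (SL.alpha x, SM.bracket m n) (1 : A)
          - Finsupp.single (actML n x, SM.alpha m) 1
          + Finsupp.single (actML m x, SM.alpha n) 1} ∪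
     {t | ∃ (a b : A) (x y : L) (m n : M), t =
        Finsupp.single (a • actML m x, b • actLM y n) (1 : A)
          + Finsupp.single (b • actML n y, a • actLM x m) 1} ∪
     {t | ∃ (a b : A) (x y : L) (m n : M), t =
        Finsupp.single (a • actML m x, b • actLM y n) (1 : A)
          - φ (a * b) • Finsupp.single (actML m x, actLM y n) (1 : A)
          + (φ a * SM.rho (actLM x m) b) • Finsupp.single (SL.alpha y, SM.alpha n) (1 : A)
          - (φ b * SM.rho (actLM y n) a) • Finsupp.single (SL.alpha x, SM.alpha m) (1 : A)})

/-- The underlying `A`-module of the non-abelian tensor product `L ∗ M`. -/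
abbrev StarMod (SL : HLR R A φ L) (SM : HLR R A φ M)
    (actLM : L → M → M) (actML : M → L → L) : Type :=
  ((L × M) →₀ A) ⧸ starRel φ SL SM actLM actML

/-- The generator `x ∗ m` of `L ∗ M`. -/
noncomputable def starMk (SL : HLR R A φ L) (SM : HLR R A φ M)
    (actLM : L → M → M) (actML : M → L → L) (x : L) (m : M) :
    StarMod φ SL SM actLM actML :=
  Submodule.Quotient.mk (Finsupp.single (x, m) (1 : A))

/-- `U` is the hom-Lie-Rinehart structure of the non-abelian tensor product `L ∗ M`. -/
def IsStarStructure (SL : HLR R A φ L) (SM : HLR R A φ M)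
    (actLM : L → M → M) (actML : M → L → L)
    (U : HLR R A φ (StarMod φ SL SM actLM actML)) : Prop :=
  (∀ (x : L) (m : M),
      U.alpha (starMk φ SL SM actLM actML x m)
        = starMk φ SL SM actLM actML (SL.alpha x) (SM.alpha m)) ∧
  (∀ (a b : A) (x y : L) (m n : M),
      U.bracket (a • starMk φ SL SM actLM actML x m)
          (b • starMk φ SL SM actLM actML y n)
        = - starMk φ SL SM actLM actML (a • actML m x) (b • actLM y n)) ∧
  (∀ (x : L) (m : M) (a : A),
      U.rho (starMk φ SL SM actLM actML x m) a = SM.rho (actLM x m) a)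

/-- A hom-Lie-Rinehart pairing of `(L, α_L)` and `(M, α_M)` into `(N, α_N)`. -/
def IsHLRPairing {N : Type}
    [AddCommGroup N] [Module R N] [Module A N] [IsScalarTower R A N]
    (SL : HLR R A φ L) (SM : HLR R A φ M) (SN : HLR R A φ N)
    (actLM : L → M → M) (actML : M → L → L) (f : L → M → N) : Prop :=
  (∀ (x y : L) (m : M), f (x + y) m = f x m + f y m) ∧
  (∀ (r : R) (x : L) (m : M), f (r • x) m = r • f x m) ∧
  (∀ (x : L) (m n : M), f x (m + n) = f x m + f x n) ∧
  (∀ (r : R) (x : L) (m : M), f x (r • m) = r • f x m) ∧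
  (∀ (x : L) (m : M) (a : A), SN.rho (f x m) a = SM.rho (actLM x m) a) ∧
  (∀ (x y : L) (m : M),
      f (SL.bracket x y) (SM.alpha m)
        = f (SL.alpha x) (actLM y m) - f (SL.alpha y) (actLM x m)) ∧
  (∀ (x : L) (m n : M),
      f (SL.alpha x) (SM.bracket m n)
        = f (actML n x) (SM.alpha m) - f (actML m x) (SM.alpha n)) ∧
  (∀ (x : L) (m : M), f (SL.alpha x) (SM.alpha m) = SN.alpha (f x m)) ∧
  (∀ (a b : A) (x y : L) (m n : M),
      f (a • actML m x) (b • actLM y n)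
        = - (φ (a * b) • SN.bracket (f x m) (f y n))
          - (φ a * SN.rho (f x m) b) • SN.alpha (f y n)
          + (φ b * SN.rho (f y n) a) • SN.alpha (f x m))

end StarDefs

section Aux13

variable {R A : Type} [CommRing R] [CommRing A] [Algebra R A] {φ : A →ₐ[R] A}
variable {L : Type} [AddCommGroup L] [Module R L] [Module A L] [IsScalarTower R A L]

namespace HLR

lemma bracket_zero_left (S : HLR R A φ L) (y : L) : S.bracket 0 y = 0 := by
  have h := S.smul_left (0 : R) 0 y
  simpa using h

lemma bracket_zero_right (S : HLR R A φ L) (x : L) : S.bracket x 0 = 0 := by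
  have h := S.smul_right (0 : R) x 0
  simpa using h

lemma alpha_zero (S : HLR R A φ L) : S.alpha 0 = 0 := by
  have h := S.alpha_smulR (0 : R) 0
  simpa using h

lemma rho_zero_left (S : HLR R A φ L) (a : A) : S.rho 0 a = 0 := by
  have h := S.rho_smulR_left (0 : R) 0 a
  simpa using h

lemma rho_alpha_bracket (S : HLR R A φ L) (x y : L) (c : A) :
    S.rho (S.bracket (S.alpha x) (S.alpha y)) (φ c) = φ (S.rho (S.bracket x y) c) := by
  rw [← S.alpha_bracket, S.rho_alpha]

end HLR

lemma uce_induction (S : HLR R A φ L) (p : UCE φ S → Prop)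
    (h0 : p 0) (hmk : ∀ a x y, p (uceMk φ S a x y))
    (hadd : ∀ ξ η, p ξ → p η → p (ξ + η)) : ∀ ξ, p ξ := by
  intro ξ
  obtain ⟨t, rfl⟩ := Submodule.Quotient.mk_surjective _ ξ
  induction t using TensorProduct.induction_on with
  | zero => simpa using h0
  | tmul a s =>
    induction s using TensorProduct.induction_on with
    | zero => simpa using h0
    | tmul x y => exact hmk a x y
    | add s₁ s₂ h₁ h₂ =>
      rw [TensorProduct.tmul_add, Submodule.Quotient.mk_add]
      exact hadd _ _ h₁ h₂
  | add t₁ t₂ h₁ h₂ =>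
    rw [Submodule.Quotient.mk_add]
    exact hadd _ _ h₁ h₂

variable (S : HLR R A φ L) (D : L → L) (σD : A → A)

private def aLin : L →ₗ[R] L :=
  { toFun := S.alpha, map_add' := S.alpha_add, map_smul' := S.alpha_smulR }

private def dLin (hD : IsAlphaDeriv φ S D σD) : L →ₗ[R] L :=
  { toFun := D, map_add' := hD.1, map_smul' := hD.2.1 }

private def sLin (hD : IsAlphaDeriv φ S D σD) : A →ₗ[R] A :=
  { toFun := σD, map_add' := hD.2.2.1, map_smul' := hD.2.2.2.1 }

private noncomputable def eMap (hD : IsAlphaDeriv φ S D σD) :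
    A ⊗[R] (L ⊗[R] L) →ₗ[R] A ⊗[R] (L ⊗[R] L) :=
  TensorProduct.map (sLin S D σD hD) (TensorProduct.map (aLin S) (aLin S))
    + TensorProduct.map φ.toLinearMap
        (TensorProduct.map (dLin S D σD hD) (aLin S)
          + TensorProduct.map (aLin S) (dLin S D σD hD))

private lemma eMap_tmul (hD : IsAlphaDeriv φ S D σD) (a : A) (x y : L) :
    eMap S D σD hD (a ⊗ₜ[R] (x ⊗ₜ[R] y))
      = σD a ⊗ₜ[R] (S.alpha x ⊗ₜ[R] S.alpha y)
        + (φ a ⊗ₜ[R] (D x ⊗ₜ[R] S.alpha y) + φ a ⊗ₜ[R] (S.alpha x ⊗ₜ[R] D y)) := by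
  simp [eMap, aLin, dLin, sLin, TensorProduct.tmul_add]

private lemma mem1 (a : A) (x : L) : a ⊗ₜ[R] (x ⊗ₜ[R] x) ∈ uceRel φ S := by
  refine Submodule.subset_span ?_
  exact Or.inl (Or.inl (Or.inl ⟨a, x, rfl⟩))

private lemma mem2 (a : A) (x y : L) :
    a ⊗ₜ[R] (x ⊗ₜ[R] y) + a ⊗ₜ[R] (y ⊗ₜ[R] x) ∈ uceRel φ S := by
  refine Submodule.subset_span ?_
  exact Or.inl (Or.inl (Or.inr ⟨a, x, y, rfl⟩))

private lemma mem3 (a : A) (x y z : L) :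
    a ⊗ₜ[R] (S.alpha x ⊗ₜ[R] S.bracket y z)
      + a ⊗ₜ[R] (S.alpha y ⊗ₜ[R] S.bracket z x)
      + a ⊗ₜ[R] (S.alpha z ⊗ₜ[R] S.bracket x y) ∈ uceRel φ S := by
  refine Submodule.subset_span ?_
  exact Or.inl (Or.inr ⟨a, x, y, z, rfl⟩)

private lemma mem4 (a : A) (x y x' y' : L) :
    φ a ⊗ₜ[R] (S.bracket x y ⊗ₜ[R] S.bracket x' y')
      + S.rho (S.bracket x y) a ⊗ₜ[R] (S.alpha x' ⊗ₜ[R] S.alpha y')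
      - (1 : A) ⊗ₜ[R] (S.bracket x y ⊗ₜ[R] (a • S.bracket x' y')) ∈ uceRel φ S := by
  refine Submodule.subset_span ?_
  exact Or.inr ⟨a, x, y, x', y', rfl⟩

set_option maxHeartbeats 2000000 in
private lemma eMap_rel (hD : IsAlphaDeriv φ S D σD) {t : A ⊗[R] (L ⊗[R] L)}
    (ht : t ∈ uceRel φ S) : ∀ a : A, eMap S D σD hD (a • t) ∈ uceRel φ S := by
  obtain ⟨hDadd, hDsm, hσadd, hσsm, hσmul, hDα, hDbr, hσφ, hDsmA, hσρ⟩ := id hD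
  induction ht using Submodule.span_induction with
  | zero => intro a; simp [zero_mem]
  | add x y hx hy ihx ihy =>
    intro a
    rw [smul_add, map_add]
    exact add_mem (ihx a) (ihy a)
  | smul b x hx ih =>
    intro a
    rw [smul_smul]
    exact ih (a * b)
  | mem g hg =>
    intro a
    rcases hg with ((⟨c, x, rfl⟩ | ⟨c, x, y, rfl⟩) | ⟨c, x, y, z, rfl⟩)
      | ⟨c, x, y, x', y', rfl⟩
    · -- type 1
      have he : eMap S D σD hD (a • (c ⊗ₜ[R] (x ⊗ₜ[R] x)))
          = σD (a * c) ⊗ₜ[R] (S.alpha x ⊗ₜ[R] S.alpha x)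
            + (φ (a * c) ⊗ₜ[R] (D x ⊗ₜ[R] S.alpha x)
              + φ (a * c) ⊗ₜ[R] (S.alpha x ⊗ₜ[R] D x)) := by
        rw [TensorProduct.smul_tmul', smul_eq_mul, eMap_tmul]
      rw [he]
      exact add_mem (mem1 S _ _) (mem2 S _ _ _)
    · -- type 2
      have he : eMap S D σD hD (a • (c ⊗ₜ[R] (x ⊗ₜ[R] y) + c ⊗ₜ[R] (y ⊗ₜ[R] x)))
          = (σD (a * c) ⊗ₜ[R] (S.alpha x ⊗ₜ[R] S.alpha y)
              + σD (a * c) ⊗ₜ[R] (S.alpha y ⊗ₜ[R] S.alpha x))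
            + ((φ (a * c) ⊗ₜ[R] (D x ⊗ₜ[R] S.alpha y)
                + φ (a * c) ⊗ₜ[R] (S.alpha y ⊗ₜ[R] D x))
              + (φ (a * c) ⊗ₜ[R] (S.alpha x ⊗ₜ[R] D y)
                + φ (a * c) ⊗ₜ[R] (D y ⊗ₜ[R] S.alpha x))) := by
        simp only [smul_add, TensorProduct.smul_tmul', smul_eq_mul, map_add, eMap_tmul]
        abel
      rw [he]
      exact add_mem (mem2 S _ _ _) (add_mem (mem2 S _ _ _) (mem2 S _ _ _))
    · -- type 3
      have he : eMap S D σD hD (a •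
            (c ⊗ₜ[R] (S.alpha x ⊗ₜ[R] S.bracket y z)
              + c ⊗ₜ[R] (S.alpha y ⊗ₜ[R] S.bracket z x)
              + c ⊗ₜ[R] (S.alpha z ⊗ₜ[R] S.bracket x y)))
          = (σD (a * c) ⊗ₜ[R] (S.alpha (S.alpha x) ⊗ₜ[R] S.bracket (S.alpha y) (S.alpha z))
              + σD (a * c) ⊗ₜ[R] (S.alpha (S.alpha y) ⊗ₜ[R] S.bracket (S.alpha z) (S.alpha x))
              + σD (a * c) ⊗ₜ[R] (S.alpha (S.alpha z) ⊗ₜ[R] S.bracket (S.alpha x) (S.alpha y)))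
            + ((φ (a * c) ⊗ₜ[R] (S.alpha (D x) ⊗ₜ[R] S.bracket (S.alpha y) (S.alpha z))
                + φ (a * c) ⊗ₜ[R] (S.alpha (S.alpha y) ⊗ₜ[R] S.bracket (S.alpha z) (D x))
                + φ (a * c) ⊗ₜ[R] (S.alpha (S.alpha z) ⊗ₜ[R] S.bracket (D x) (S.alpha y)))
              + ((φ (a * c) ⊗ₜ[R] (S.alpha (S.alpha x) ⊗ₜ[R] S.bracket (D y) (S.alpha z))
                  + φ (a * c) ⊗ₜ[R] (S.alpha (D y) ⊗ₜ[R] S.bracket (S.alpha z) (S.alpha x))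
                  + φ (a * c) ⊗ₜ[R] (S.alpha (S.alpha z) ⊗ₜ[R] S.bracket (S.alpha x) (D y)))
                + (φ (a * c) ⊗ₜ[R] (S.alpha (S.alpha x) ⊗ₜ[R] S.bracket (S.alpha y) (D z))
                  + φ (a * c) ⊗ₜ[R] (S.alpha (S.alpha y) ⊗ₜ[R] S.bracket (D z) (S.alpha x))
                  + φ (a * c) ⊗ₜ[R] (S.alpha (D z) ⊗ₜ[R] S.bracket (S.alpha x) (S.alpha y))))) := by
        simp only [smul_add, TensorProduct.smul_tmul', smul_eq_mul, map_add, eMap_tmul,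
          hDα, hDbr, S.alpha_bracket, TensorProduct.tmul_add]
        abel
      rw [he]
      exact add_mem (mem3 S _ _ _ _)
        (add_mem (mem3 S _ _ _ _) (add_mem (mem3 S _ _ _ _) (mem3 S _ _ _ _)))
    · -- type 4
      have he : eMap S D σD hD (a •
            (φ c ⊗ₜ[R] (S.bracket x y ⊗ₜ[R] S.bracket x' y')
              + S.rho (S.bracket x y) c ⊗ₜ[R] (S.alpha x' ⊗ₜ[R] S.alpha y')
              - (1 : A) ⊗ₜ[R] (S.bracket x y ⊗ₜ[R] (c • S.bracket x' y'))))
          = φ a • (φ (σD c) ⊗ₜ[R]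
                (S.bracket (S.alpha x) (S.alpha y) ⊗ₜ[R] S.bracket (S.alpha x') (S.alpha y'))
              + S.rho (S.bracket (S.alpha x) (S.alpha y)) (σD c) ⊗ₜ[R]
                (S.alpha (S.alpha x') ⊗ₜ[R] S.alpha (S.alpha y'))
              - (1 : A) ⊗ₜ[R] (S.bracket (S.alpha x) (S.alpha y) ⊗ₜ[R]
                  (σD c • S.bracket (S.alpha x') (S.alpha y'))))
            + (φ a • (φ (φ c) ⊗ₜ[R]
                  (S.bracket (D x) (S.alpha y) ⊗ₜ[R] S.bracket (S.alpha x') (S.alpha y'))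
                + S.rho (S.bracket (D x) (S.alpha y)) (φ c) ⊗ₜ[R]
                  (S.alpha (S.alpha x') ⊗ₜ[R] S.alpha (S.alpha y'))
                - (1 : A) ⊗ₜ[R] (S.bracket (D x) (S.alpha y) ⊗ₜ[R]
                    (φ c • S.bracket (S.alpha x') (S.alpha y'))))
              + φ a • (φ (φ c) ⊗ₜ[R]
                  (S.bracket (S.alpha x) (D y) ⊗ₜ[R] S.bracket (S.alpha x') (S.alpha y'))
                + S.rho (S.bracket (S.alpha x) (D y)) (φ c) ⊗ₜ[R]
                  (S.alpha (S.alpha x') ⊗ₜ[R] S.alpha (S.alpha y'))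
                - (1 : A) ⊗ₜ[R] (S.bracket (S.alpha x) (D y) ⊗ₜ[R]
                    (φ c • S.bracket (S.alpha x') (S.alpha y')))))
            + (φ a • (φ (φ c) ⊗ₜ[R]
                  (S.bracket (S.alpha x) (S.alpha y) ⊗ₜ[R] S.bracket (D x') (S.alpha y'))
                + S.rho (S.bracket (S.alpha x) (S.alpha y)) (φ c) ⊗ₜ[R]
                  (S.alpha (D x') ⊗ₜ[R] S.alpha (S.alpha y'))
                - (1 : A) ⊗ₜ[R] (S.bracket (S.alpha x) (S.alpha y) ⊗ₜ[R]
                    (φ c • S.bracket (D x') (S.alpha y'))))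
              + φ a • (φ (φ c) ⊗ₜ[R]
                  (S.bracket (S.alpha x) (S.alpha y) ⊗ₜ[R] S.bracket (S.alpha x') (D y'))
                + S.rho (S.bracket (S.alpha x) (S.alpha y)) (φ c) ⊗ₜ[R]
                  (S.alpha (S.alpha x') ⊗ₜ[R] S.alpha (D y'))
                - (1 : A) ⊗ₜ[R] (S.bracket (S.alpha x) (S.alpha y) ⊗ₜ[R]
                    (φ c • S.bracket (S.alpha x') (D y')))))
            + σD a • (φ (φ c) ⊗ₜ[R]
                (S.bracket (S.alpha x) (S.alpha y) ⊗ₜ[R] S.bracket (S.alpha x') (S.alpha y'))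
              + S.rho (S.bracket (S.alpha x) (S.alpha y)) (φ c) ⊗ₜ[R]
                (S.alpha (S.alpha x') ⊗ₜ[R] S.alpha (S.alpha y'))
              - (1 : A) ⊗ₜ[R] (S.bracket (S.alpha x) (S.alpha y) ⊗ₜ[R]
                  (φ c • S.bracket (S.alpha x') (S.alpha y')))) := by
        simp only [smul_add, smul_sub, TensorProduct.smul_tmul', smul_eq_mul,
          map_add, map_sub, eMap_tmul, hDα, hDbr, hσφ, hσmul, hσρ, hDsmA,
          S.alpha_bracket, S.alpha_smulA, S.rho_add_left, S.rho_alpha_bracket,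
          map_mul, mul_add, add_mul, TensorProduct.add_tmul, TensorProduct.tmul_add, mul_one, one_mul]
        ring_nf
        abel
      rw [he]
      exact add_mem (add_mem (add_mem
          (Submodule.smul_mem _ _ (mem4 S _ _ _ _ _))
          (add_mem (Submodule.smul_mem _ _ (mem4 S _ _ _ _ _))
            (Submodule.smul_mem _ _ (mem4 S _ _ _ _ _))))
          (add_mem (Submodule.smul_mem _ _ (mem4 S _ _ _ _ _))
            (Submodule.smul_mem _ _ (mem4 S _ _ _ _ _))))
        (Submodule.smul_mem _ _ (mem4 S _ _ _ _ _))

noncomputable def uceD (hD : IsAlphaDeriv φ S D σD) : UCE φ S →ₗ[R] UCE φ S :=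
  (Submodule.liftQ ((uceRel φ S).restrictScalars R)
      (((uceRel φ S).mkQ.restrictScalars R) ∘ₗ eMap S D σD hD)
      (fun t ht => by
        simp only [LinearMap.mem_ker, LinearMap.comp_apply,
          LinearMap.restrictScalars_apply, Submodule.mkQ_apply,
          Submodule.Quotient.mk_eq_zero]
        simpa using eMap_rel S D σD hD ht 1)) ∘ₗ
    (Submodule.Quotient.restrictScalarsEquiv R (uceRel φ S)).symm.toLinearMap

lemma uceD_mkq (hD : IsAlphaDeriv φ S D σD) (t : A ⊗[R] (L ⊗[R] L)) :
    uceD S D σD hD (Submodule.Quotient.mk t)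
      = Submodule.Quotient.mk (eMap S D σD hD t) := rfl

lemma uceMk_add₁ (a b : A) (x y : L) :
    uceMk φ S (a + b) x y = uceMk φ S a x y + uceMk φ S b x y := by
  simp [uceMk, TensorProduct.add_tmul, Submodule.Quotient.mk_add]

lemma uceMk_add₂ (a : A) (x x' y : L) :
    uceMk φ S a (x + x') y = uceMk φ S a x y + uceMk φ S a x' y := by
  simp [uceMk, TensorProduct.add_tmul, TensorProduct.tmul_add, Submodule.Quotient.mk_add]

lemma uceMk_add₃ (a : A) (x y y' : L) :
    uceMk φ S a x (y + y') = uceMk φ S a x y + uceMk φ S a x y' := by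
  simp [uceMk, TensorProduct.tmul_add, Submodule.Quotient.mk_add]

lemma uceMk_smul (a b : A) (x y : L) :
    a • uceMk φ S b x y = uceMk φ S (a * b) x y := by
  rw [uceMk, uceMk, ← Submodule.Quotient.mk_smul, TensorProduct.smul_tmul', smul_eq_mul]

lemma uceD_mk (hD : IsAlphaDeriv φ S D σD) (a : A) (x y : L) :
    uceD S D σD hD (uceMk φ S a x y)
      = uceMk φ S (σD a) (S.alpha x) (S.alpha y)
        + uceMk φ S (φ a) (D x) (S.alpha y)
        + uceMk φ S (φ a) (S.alpha x) (D y) := by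
  rw [uceMk, uceD_mkq, eMap_tmul]
  simp only [uceMk, Submodule.Quotient.mk_add]
  abel

end Aux13

/-- an `α`-derivation `D` of `(L, α_L)` induces a well-defined `α`-derivation
`uce^φ_A(D)` of `uce^φ_A L` with the same symbol, preserving `Ker(u_L)`. -/
theorem statement_13
    {R A : Type} [CommRing R] [CommRing A] [Algebra R A] (φ : A →ₐ[R] A)
    {L : Type} [AddCommGroup L] [Module R L] [Module A L] [IsScalarTower R A L]
    (S : HLR R A φ L)
    (D : L → L) (σD : A → A) (hD : IsAlphaDeriv φ S D σD)
    (U : HLR R A φ (UCE φ S)) (hU : IsUceStructure φ S U)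
    (u : UCE φ S → L) (hu : IsUceMap φ S u) :
    ∃ Du : UCE φ S → UCE φ S,
      IsAlphaDeriv φ U Du σD ∧
      (∀ (a : A) (x y : L),
        Du (uceMk φ S a x y) =
          uceMk φ S (σD a) (S.alpha x) (S.alpha y)
            + uceMk φ S (φ a) (D x) (S.alpha y)
            + uceMk φ S (φ a) (S.alpha x) (D y)) ∧
      ∀ ξ : UCE φ S, u ξ = 0 → u (Du ξ) = 0 := by
  obtain ⟨hUb, hUα, hUρ⟩ := hU
  obtain ⟨huadd, husmul, humk⟩ := hu
  obtain ⟨hDadd, hDsm, hσadd, hσsm, hσmul, hDα, hDbr, hσφ, hDsmA, hσρ⟩ := id hD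
  have hD0 : D 0 = 0 := by have h := hDsm 0 0; simpa using h
  have hσ0 : σD 0 = 0 := by have h := hσsm 0 0; simpa using h
  have hu0 : u 0 = 0 := by have h := husmul 0 0; simpa using h
  have h6 : ∀ ξ, uceD S D σD hD (U.alpha ξ) = U.alpha (uceD S D σD hD ξ) := by
    refine uce_induction S _ ?_ ?_ ?_
    · simp [U.alpha_zero]
    · intro a x y
      simp only [hUα, uceD_mk, U.alpha_add, hσφ, hDα]
    · intro ξ η ih1 ih2
      simp only [U.alpha_add, map_add, ih1, ih2]
  have hgen : ∀ a₁ x₁ y₁ a₂ x₂ y₂,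
      uceD S D σD hD (U.bracket (uceMk φ S a₁ x₁ y₁) (uceMk φ S a₂ x₂ y₂))
        = U.bracket (uceD S D σD hD (uceMk φ S a₁ x₁ y₁)) (U.alpha (uceMk φ S a₂ x₂ y₂))
          + U.bracket (U.alpha (uceMk φ S a₁ x₁ y₁)) (uceD S D σD hD (uceMk φ S a₂ x₂ y₂)) := by
    intro a₁ x₁ y₁ a₂ x₂ y₂
    simp only [hUb, hUα, map_add, map_sub, uceD_mk, U.add_left, U.add_right,
      uceMk_add₁, uceMk_add₂, uceMk_add₃, hDα, hDbr, hσφ, hσmul, hσρ,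
      S.alpha_bracket, S.rho_add_left, S.rho_alpha_bracket, map_mul, mul_add, add_mul]
    ring_nf
    abel
  have h7 : ∀ ξ η, uceD S D σD hD (U.bracket ξ η)
      = U.bracket (uceD S D σD hD ξ) (U.alpha η)
        + U.bracket (U.alpha ξ) (uceD S D σD hD η) := by
    refine uce_induction S _ ?_ ?_ ?_
    · intro η
      simp [U.bracket_zero_left, U.alpha_zero]
    · intro a x y
      refine uce_induction S _ ?_ ?_ ?_
      · simp [U.bracket_zero_right, U.alpha_zero]
      · intro b z w
        exact hgen a x y b z w
      · intro η₁ η₂ ih1 ih2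
        simp only [U.add_right, map_add, U.alpha_add, ih1, ih2]
        abel
    · intro ξ₁ ξ₂ ih1 ih2 η
      simp only [U.add_left, map_add, U.alpha_add, ih1, ih2]
      abel
  have h9 : ∀ (a : A) (ξ : UCE φ S), uceD S D σD hD (a • ξ)
      = φ a • uceD S D σD hD ξ + σD a • U.alpha ξ := by
    intro a
    refine uce_induction S _ ?_ ?_ ?_
    · simp [U.alpha_zero]
    · intro b x y
      simp only [uceMk_smul, uceD_mk, hUα, smul_add, hσmul, map_mul, uceMk_add₁]
      ring_nf
      abel
    · intro ξ η ih1 ih2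
      simp only [smul_add, map_add, U.alpha_add, ih1, ih2]
      abel
  have h10 : ∀ (ξ : UCE φ S) (a : A), σD (U.rho ξ a)
      = U.rho (U.alpha ξ) (σD a) + U.rho (uceD S D σD hD ξ) (φ a) := by
    refine uce_induction S _ ?_ ?_ ?_
    · intro a
      simp [U.rho_zero_left, hσ0, U.alpha_zero]
    · intro b x y a
      simp only [hUρ, hUα, uceD_mk, U.rho_add_left, hσmul, hσρ, hσφ, hDbr,
        S.alpha_bracket, S.rho_add_left, S.rho_alpha_bracket, map_mul, mul_add, add_mul]
      ring
    · intro ξ η ih1 ih2 a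
      simp only [U.rho_add_left, hσadd, U.alpha_add, map_add, ih1 a, ih2 a]
      ring
  have hcomm : ∀ ξ, u (uceD S D σD hD ξ) = D (u ξ) := by
    refine uce_induction S _ ?_ ?_ ?_
    · rw [map_zero, hu0, hD0]
    · intro a x y
      rw [uceD_mk, huadd, huadd, humk, humk, humk, humk, hDsmA, hDbr, S.alpha_bracket,
        smul_add]
      abel
    · intro ξ η ih1 ih2
      rw [map_add, huadd, huadd, ih1, ih2, hDadd]
  refine ⟨uceD S D σD hD,
    ⟨fun ξ η => map_add _ ξ η, fun r ξ => map_smul _ r ξ, hσadd, hσsm, hσmul,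
      h6, h7, hσφ, h9, h10⟩,
    uceD_mk S D σD hD,
    fun ξ h0 => by rw [hcomm, h0, hD0]⟩
end

section
/- Assume φ: A → A is surjective. Let (N, α_N) →^j (K, α_K) →^f (L, α_L) be a central extension of hom-Lie-Rinehart algebras over (A, φ) with (K, α_K) α-perfect, and set P = uce^φ_A(f)(Ker(u_K)) ⊆ uce^φ_A L. An α-derivation D_L of (L, α_L) with symbol σ_D lifts to an α-derivation D_K of (K, α_K) with the same symbol σ_D satisfying f ∘ D_K = D_L ∘ f (and such a lift is unique) if and only if uce^φ_A(D_L)(P) ⊆ P; moreover in that case D_K(Ker(f)) ⊆ Ker(f). -/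
open TensorProduct Function Set

section AuxLemmas

theorem addhom_zero {M N : Type} [AddCommGroup M] [AddCommGroup N] (g : M → N)
    (h : ∀ x y, g (x + y) = g x + g y) : g 0 = 0 := by
  have h0 := h 0 0
  rw [add_zero] at h0
  exact left_eq_add.mp h0

theorem addhom_sub {M N : Type} [AddCommGroup M] [AddCommGroup N] (g : M → N)
    (h : ∀ x y, g (x + y) = g x + g y) (x y : M) : g (x - y) = g x - g y := by
  have := h (x - y) y
  rw [sub_add_cancel] at this
  rw [this]; abel

variable {R A : Type} [CommRing R] [CommRing A] [Algebra R A] (φ : A →ₐ[R] A)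
variable {L : Type} [AddCommGroup L] [Module R L] [Module A L] [IsScalarTower R A L]

theorem uce_ind (S : HLR R A φ L) {p : UCE φ S → Prop}
    (h0 : p 0) (hmk : ∀ a x y, p (uceMk φ S a x y))
    (hadd : ∀ ξ η, p ξ → p η → p (ξ + η)) (ξ : UCE φ S) : p ξ := by
  obtain ⟨t, rfl⟩ := Submodule.Quotient.mk_surjective _ ξ
  induction t using TensorProduct.induction_on with
  | zero => simpa using h0
  | tmul a m =>
    induction m using TensorProduct.induction_on with
    | zero => rw [tmul_zero]; simpa using h0
    | tmul x y => exact hmk a x y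
    | add m n hm hn => rw [tmul_add, Submodule.Quotient.mk_add]; exact hadd _ _ hm hn
  | add s t hs ht => rw [Submodule.Quotient.mk_add]; exact hadd _ _ hs ht

theorem hlr_br_zero_left (S : HLR R A φ L) (y : L) : S.bracket 0 y = 0 := by
  have := S.add_left 0 0 y
  rw [add_zero] at this
  exact left_eq_add.mp this

theorem hlr_br_zero_right (S : HLR R A φ L) (x : L) : S.bracket x 0 = 0 := by
  have := S.add_right x 0 0
  rw [add_zero] at this
  exact left_eq_add.mp this

theorem hlr_br_sub_left (S : HLR R A φ L) (x y z : L) :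
    S.bracket (x - y) z = S.bracket x z - S.bracket y z := by
  have := S.add_left (x - y) y z
  rw [sub_add_cancel] at this
  rw [this]; abel

theorem hlr_br_sub_right (S : HLR R A φ L) (x y z : L) :
    S.bracket x (y - z) = S.bracket x y - S.bracket x z := by
  have := S.add_right x (y - z) z
  rw [sub_add_cancel] at this
  rw [this]; abel

theorem hlr_alpha_zero (S : HLR R A φ L) : S.alpha 0 = 0 :=
  addhom_zero S.alpha S.alpha_add

theorem hlr_rho_zero (S : HLR R A φ L) (a : A) : S.rho 0 a = 0 := by
  have := S.rho_add_left 0 0 a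
  rw [add_zero] at this
  exact left_eq_add.mp this

theorem hlr_br_smul_smul (S : HLR R A φ L) (a b : A) (p q : L) :
    S.bracket (a • p) (b • q) = φ (a * b) • S.bracket p q
      + (φ a * S.rho p b) • S.alpha q - (φ b * S.rho q a) • S.alpha p := by
  have h1 : S.bracket (a • p) q = φ a • S.bracket p q - S.rho q a • S.alpha p := by
    rw [S.skew (a • p) q, S.leibniz q a p, S.skew q p]
    rw [neg_add, smul_neg, neg_neg, ← sub_eq_add_neg]
  rw [S.leibniz (a • p) b q, h1, S.rho_smulA a p b, map_mul, smul_sub,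
    smul_smul, smul_smul, mul_smul, smul_smul, mul_comm (φ b) (φ a)]
  abel

end AuxLemmas

/-- lifting of `α`-derivations to central extensions with `α`-perfect middle
algebra: `D_L` lifts (uniquely) to an `α`-derivation `D_K` of `(K, α_K)` with the same
symbol and `f ∘ D_K = D_L ∘ f` iff `uce^φ_A(D_L)(P) ⊆ P`; any lift preserves `Ker f`. -/
theorem statement_15
    {R A : Type} [CommRing R] [CommRing A] [Algebra R A] (φ : A →ₐ[R] A)
    (hφ : Function.Surjective ⇑φ)
    {N K L : Type}
    [AddCommGroup N] [Module R N] [Module A N] [IsScalarTower R A N]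
    [AddCommGroup K] [Module R K] [Module A K] [IsScalarTower R A K]
    [AddCommGroup L] [Module R L] [Module A L] [IsScalarTower R A L]
    (SN : HLR R A φ N) (SK : HLR R A φ K) (SL : HLR R A φ L)
    (j : N → K) (f : K → L)
    (hce : IsCentralExt SN SK SL j f) (hap : SK.IsAlphaPerfect)
    (UK : HLR R A φ (UCE φ SK)) (hUK : IsUceStructure φ SK UK)
    (UL : HLR R A φ (UCE φ SL)) (hUL : IsUceStructure φ SL UL)
    (uK : UCE φ SK → K) (huK : IsUceMap φ SK uK)
    (F : UCE φ SK → UCE φ SL) (hF : IsUceFunctorMap φ SK SL UK UL f F)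
    (P : Set (UCE φ SL)) (hP : P = F '' {ξ | uK ξ = 0})
    (DL : L → L) (σD : A → A) (hDL : IsAlphaDeriv φ SL DL σD)
    (DLu : UCE φ SL → UCE φ SL)
    (hDLu : IsAlphaDeriv φ UL DLu σD)
    (hDLuf : ∀ (a : A) (x y : L),
      DLu (uceMk φ SL a x y) =
        uceMk φ SL (σD a) (SL.alpha x) (SL.alpha y)
          + uceMk φ SL (φ a) (DL x) (SL.alpha y)
          + uceMk φ SL (φ a) (SL.alpha x) (DL y)) :
    ((∃! DK : K → K, IsAlphaDeriv φ SK DK σD ∧ ∀ k, f (DK k) = DL (f k)) ↔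
      DLu '' P ⊆ P) ∧
    (∀ DK : K → K, IsAlphaDeriv φ SK DK σD → (∀ k, f (DK k) = DL (f k)) →
      ∀ k, f k = 0 → f (DK k) = 0) := by
  classical
  obtain ⟨-, hf, -, hfsurj, -, hcent⟩ := hce
  obtain ⟨f_add, f_smul, f_br, f_al, f_rho⟩ := hf
  obtain ⟨uK_add, uK_smul, uK_mk⟩ := huK
  obtain ⟨UK_br, UK_al, UK_rho⟩ := hUK
  obtain ⟨UL_br, UL_al, UL_rho⟩ := hUL
  obtain ⟨⟨F_add, F_smul, F_br, F_al, F_rho⟩, F_mk⟩ := hF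
  obtain ⟨DL_add, DL_smulR, sD_add, sD_smulR, sD_mul, DL_al, DL_br, sD_phi,
    DL_smulA, DL_rho⟩ := hDL
  obtain ⟨DLu_add, DLu_smulR, -, -, -, DLu_al, DLu_br, -, DLu_smulA, DLu_rho⟩ := hDLu
  -- basic additive facts
  have f0 : f 0 = 0 := addhom_zero f f_add
  have f_sub : ∀ x y, f (x - y) = f x - f y := addhom_sub f f_add
  have uK0 : uK 0 = 0 := addhom_zero uK uK_add
  have uK_sub : ∀ x y, uK (x - y) = uK x - uK y := addhom_sub uK uK_add
  have F0 : F 0 = 0 := addhom_zero F F_add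
  have F_sub : ∀ x y, F (x - y) = F x - F y := addhom_sub F F_add
  have DLu0 : DLu 0 = 0 := addhom_zero DLu DLu_add
  have DLu_sub : ∀ x y, DLu (x - y) = DLu x - DLu y := addhom_sub DLu DLu_add
  have DL0 : DL 0 = 0 := addhom_zero DL DL_add
  have f_rsmul : ∀ (r : R) (k : K), f (r • k) = r • f k := by
    intro r k
    rw [← algebraMap_smul A r k, f_smul, algebraMap_smul]
  have uK_rsmul : ∀ (r : R) (ξ : UCE φ SK), uK (r • ξ) = r • uK ξ := by
    intro r ξ
    rw [← algebraMap_smul A r ξ, uK_smul, algebraMap_smul]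
  have F_rsmul : ∀ (r : R) (ξ : UCE φ SK), F (r • ξ) = r • F ξ := by
    intro r ξ
    rw [← algebraMap_smul A r ξ, F_smul, algebraMap_smul]
  -- centrality of the kernel of f
  have cent : ∀ c : K, f c = 0 → ∀ z : K, SK.bracket c z = 0 ∧ SK.bracket z c = 0 := by
    intro c hc z
    have hm := hcent (show c ∈ {k | f k = 0} from hc)
    have h1 := (hm 1 z).1
    rw [one_smul] at h1
    refine ⟨h1, ?_⟩
    rw [SK.skew z c, h1, neg_zero]
  -- alternating brackets
  have uKmk_self : ∀ (a : A) (x : K), uceMk φ SK a x x = 0 := by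
    intro a x
    exact (Submodule.Quotient.mk_eq_zero _).mpr
      (Submodule.subset_span (Or.inl (Or.inl (Or.inl ⟨a, x, rfl⟩))))
  have brK_self : ∀ x : K, SK.bracket x x = 0 := by
    intro x
    have h := uK_mk 1 x x
    rw [uKmk_self, uK0, one_smul] at h
    exact h.symm
  have brL_self : ∀ x : L, SL.bracket x x = 0 := by
    intro x
    obtain ⟨k, rfl⟩ := hfsurj x
    rw [← f_br, brK_self, f0]
  -- the canonical map uL : UCE φ SL → L
  let brLmap : L →ₗ[R] L →ₗ[R] L :=
    LinearMap.mk₂ R SL.bracket SL.add_left SL.smul_left SL.add_right SL.smul_right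
  let uLlin : (A ⊗[R] (L ⊗[R] L)) →ₗ[A] L :=
    LinearMap.liftBaseChange A (TensorProduct.lift brLmap)
  have uLlin_tmul : ∀ (a : A) (x y : L), uLlin (a ⊗ₜ[R] (x ⊗ₜ[R] y)) = a • SL.bracket x y := by
    intro a x y
    simp [uLlin, brLmap]
  have hkeruL : uceRel φ SL ≤ LinearMap.ker uLlin := by
    rw [uceRel, Submodule.span_le]
    rintro t (((⟨a, x, rfl⟩ | ⟨a, x, y, rfl⟩) | ⟨a, x, y, z, rfl⟩) |
      ⟨a, x, y, x', y', rfl⟩) <;>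
      simp only [SetLike.mem_coe, LinearMap.mem_ker, map_add, map_sub, uLlin_tmul]
    · rw [brL_self, smul_zero]
    · rw [SL.skew y x, smul_neg, add_neg_cancel]
    · rw [← smul_add, ← smul_add, SL.hom_jacobi, smul_zero]
    · rw [one_smul, SL.leibniz, SL.alpha_bracket]
      abel
  let uL : UCE φ SL →ₗ[A] L := Submodule.liftQ _ uLlin hkeruL
  have uL_mk : ∀ (a : A) (x y : L), uL (uceMk φ SL a x y) = a • SL.bracket x y := by
    intro a x y
    exact (Submodule.liftQ_apply _ uLlin _).trans (uLlin_tmul a x y)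
  -- a set-theoretic section of f
  choose s hs using hfsurj
  have lift_indep : ∀ x y x' y' : K, f x = f x' → f y = f y' →
      SK.bracket x y = SK.bracket x' y' := by
    intro x y x' y' hx hy
    have hc : f (x - x') = 0 := by rw [f_sub, hx, sub_self]
    have hd : f (y - y') = 0 := by rw [f_sub, hy, sub_self]
    have e1 : SK.bracket x y - SK.bracket x' y = 0 := by
      rw [← hlr_br_sub_left]; exact (cent _ hc y).1
    have e2 : SK.bracket x' y - SK.bracket x' y' = 0 := by
      rw [← hlr_br_sub_right]; exact (cent _ hd x').2
    have := sub_eq_zero.mp e1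
    rw [this]
    exact sub_eq_zero.mp e2
  have B_lift : ∀ x y : K, SK.bracket (s (f x)) (s (f y)) = SK.bracket x y := by
    intro x y
    exact lift_indep _ _ _ _ (hs (f x)) (hs (f y))
  -- the map lam : UCE φ SL → K, (a, x, y) ↦ a • [s x, s y]
  have B_addl : ∀ x y z : L, SK.bracket (s (x + y)) (s z)
      = SK.bracket (s x) (s z) + SK.bracket (s y) (s z) := by
    intro x y z
    have h1 : SK.bracket (s (x + y)) (s z) = SK.bracket (s x + s y) (s z) :=
      lift_indep _ _ _ _ (by rw [hs, f_add, hs, hs]) rfl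
    rw [h1, SK.add_left]
  have B_smull : ∀ (r : R) (x z : L), SK.bracket (s (r • x)) (s z)
      = r • SK.bracket (s x) (s z) := by
    intro r x z
    have h1 : SK.bracket (s (r • x)) (s z) = SK.bracket (r • s x) (s z) :=
      lift_indep _ _ _ _ (by rw [hs, f_rsmul, hs]) rfl
    rw [h1, SK.smul_left]
  have B_addr : ∀ x y z : L, SK.bracket (s x) (s (y + z))
      = SK.bracket (s x) (s y) + SK.bracket (s x) (s z) := by
    intro x y z
    have h1 : SK.bracket (s x) (s (y + z)) = SK.bracket (s x) (s y + s z) :=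
      lift_indep _ _ _ _ rfl (by rw [hs, f_add, hs, hs])
    rw [h1, SK.add_right]
  have B_smulr : ∀ (r : R) (x z : L), SK.bracket (s x) (s (r • z))
      = r • SK.bracket (s x) (s z) := by
    intro r x z
    have h1 : SK.bracket (s x) (s (r • z)) = SK.bracket (s x) (r • s z) :=
      lift_indep _ _ _ _ rfl (by rw [hs, f_rsmul, hs])
    rw [h1, SK.smul_right]
  let Bmap : L →ₗ[R] L →ₗ[R] K :=
    LinearMap.mk₂ R (fun x y => SK.bracket (s x) (s y)) B_addl B_smull B_addr B_smulr
  let lamlin : (A ⊗[R] (L ⊗[R] L)) →ₗ[A] K :=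
    LinearMap.liftBaseChange A (TensorProduct.lift Bmap)
  have lamlin_tmul : ∀ (a : A) (x y : L),
      lamlin (a ⊗ₜ[R] (x ⊗ₜ[R] y)) = a • SK.bracket (s x) (s y) := by
    intro a x y
    simp [lamlin, Bmap]
  have hkerlam : uceRel φ SL ≤ LinearMap.ker lamlin := by
    rw [uceRel, Submodule.span_le]
    rintro t (((⟨a, x, rfl⟩ | ⟨a, x, y, rfl⟩) | ⟨a, x, y, z, rfl⟩) |
      ⟨a, x, y, x', y', rfl⟩) <;>
      simp only [SetLike.mem_coe, LinearMap.mem_ker, map_add, map_sub, lamlin_tmul]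
    · rw [brK_self, smul_zero]
    · rw [SK.skew (s y) (s x), smul_neg, add_neg_cancel]
    · have e1 : SK.bracket (s (SL.alpha x)) (s (SL.bracket y z))
          = SK.bracket (SK.alpha (s x)) (SK.bracket (s y) (s z)) :=
        lift_indep _ _ _ _ (by rw [hs, f_al, hs]) (by rw [hs, f_br, hs, hs])
      have e2 : SK.bracket (s (SL.alpha y)) (s (SL.bracket z x))
          = SK.bracket (SK.alpha (s y)) (SK.bracket (s z) (s x)) :=
        lift_indep _ _ _ _ (by rw [hs, f_al, hs]) (by rw [hs, f_br, hs, hs])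
      have e3 : SK.bracket (s (SL.alpha z)) (s (SL.bracket x y))
          = SK.bracket (SK.alpha (s z)) (SK.bracket (s x) (s y)) :=
        lift_indep _ _ _ _ (by rw [hs, f_al, hs]) (by rw [hs, f_br, hs, hs])
      rw [e1, e2, e3, ← smul_add, ← smul_add, SK.hom_jacobi, smul_zero]
    · have e1 : SK.bracket (s (SL.bracket x y)) (s (SL.bracket x' y'))
          = SK.bracket (SK.bracket (s x) (s y)) (SK.bracket (s x') (s y')) :=
        lift_indep _ _ _ _ (by rw [hs, f_br, hs, hs]) (by rw [hs, f_br, hs, hs])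
      have e2 : SK.bracket (s (SL.alpha x')) (s (SL.alpha y'))
          = SK.bracket (SK.alpha (s x')) (SK.alpha (s y')) :=
        lift_indep _ _ _ _ (by rw [hs, f_al, hs]) (by rw [hs, f_al, hs])
      have e3 : SK.bracket (s (SL.bracket x y)) (s (a • SL.bracket x' y'))
          = SK.bracket (SK.bracket (s x) (s y)) (a • SK.bracket (s x') (s y')) :=
        lift_indep _ _ _ _ (by rw [hs, f_br, hs, hs])
          (by rw [hs, f_smul, f_br, hs, hs])
      have e4 : SL.rho (SL.bracket x y) a = SK.rho (SK.bracket (s x) (s y)) a := by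
        rw [← f_rho, f_br, hs, hs]
      rw [e1, e2, e3, e4, one_smul, SK.leibniz, SK.alpha_bracket]
      abel
  let lam : UCE φ SL →ₗ[A] K := Submodule.liftQ _ lamlin hkerlam
  have lam_mk : ∀ (a : A) (x y : L),
      lam (uceMk φ SL a x y) = a • SK.bracket (s x) (s y) := by
    intro a x y
    exact (Submodule.liftQ_apply _ lamlin _).trans (lamlin_tmul a x y)
  -- lam ∘ F = uK, hence ker F ⊆ ker uK
  have lamF : ∀ ξ : UCE φ SK, lam (F ξ) = uK ξ := by
    intro ξ
    refine uce_ind φ SK (p := fun ξ => lam (F ξ) = uK ξ) ?_ ?_ ?_ ξ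
    · show lam (F 0) = uK 0
      rw [F0, map_zero, uK0]
    · intro a x y
      show lam (F (uceMk φ SK a x y)) = uK (uceMk φ SK a x y)
      rw [F_mk, lam_mk, uK_mk, B_lift]
    · intro ξ η h1 h2
      show lam (F (ξ + η)) = uK (ξ + η)
      rw [F_add, map_add, uK_add]
      rw [show lam (F ξ) = uK ξ from h1, show lam (F η) = uK η from h2]
  have kerF : ∀ ξ : UCE φ SK, F ξ = 0 → uK ξ = 0 := by
    intro ξ h
    rw [← lamF, h, map_zero]
  -- f ∘ uK = uL ∘ F
  have fuK : ∀ ξ : UCE φ SK, f (uK ξ) = uL (F ξ) := by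
    intro ξ
    refine uce_ind φ SK (p := fun ξ => f (uK ξ) = uL (F ξ)) ?_ ?_ ?_ ξ
    · show f (uK 0) = uL (F 0)
      rw [uK0, f0, F0, map_zero]
    · intro a x y
      show f (uK (uceMk φ SK a x y)) = uL (F (uceMk φ SK a x y))
      rw [uK_mk, f_smul, f_br, F_mk, uL_mk]
    · intro ξ η h1 h2
      show f (uK (ξ + η)) = uL (F (ξ + η))
      rw [uK_add, f_add, F_add, map_add]
      rw [show f (uK ξ) = uL (F ξ) from h1, show f (uK η) = uL (F η) from h2]
  -- uL ∘ DLu = DL ∘ uL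
  have uLD : ∀ ζ : UCE φ SL, uL (DLu ζ) = DL (uL ζ) := by
    intro ζ
    refine uce_ind φ SL (p := fun ζ => uL (DLu ζ) = DL (uL ζ)) ?_ ?_ ?_ ζ
    · show uL (DLu 0) = DL (uL 0)
      rw [DLu0, map_zero, DL0]
    · intro a x y
      show uL (DLu (uceMk φ SL a x y)) = DL (uL (uceMk φ SL a x y))
      rw [hDLuf, map_add, map_add, uL_mk, uL_mk, uL_mk, uL_mk, DL_smulA,
        DL_br, SL.alpha_bracket, smul_add]
      abel
    · intro ζ₁ ζ₂ h1 h2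
      show uL (DLu (ζ₁ + ζ₂)) = DL (uL (ζ₁ + ζ₂))
      rw [DLu_add, map_add, map_add, DL_add]
      rw [show uL (DLu ζ₁) = DL (uL ζ₁) from h1, show uL (DLu ζ₂) = DL (uL ζ₂) from h2]
  -- surjectivity of F and uK
  have F_surj : ∀ ζ : UCE φ SL, ∃ η, F η = ζ := by
    intro ζ
    refine uce_ind φ SL (p := fun ζ => ∃ η, F η = ζ) ?_ ?_ ?_ ζ
    · exact ⟨0, F0⟩
    · intro a x y
      exact ⟨uceMk φ SK a (s x) (s y), by rw [F_mk, hs, hs]⟩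
    · rintro ζ₁ ζ₂ ⟨η₁, rfl⟩ ⟨η₂, rfl⟩
      exact ⟨η₁ + η₂, F_add η₁ η₂⟩
  have uK_surj : ∀ k : K, ∃ ξ, uK ξ = k := by
    intro k
    have hk : k ∈ Submodule.span A
        {z : K | ∃ x y, z = SK.bracket (SK.alpha x) (SK.alpha y)} := by
      rw [hap]; exact Submodule.mem_top
    refine Submodule.span_induction ?_ ?_ ?_ ?_ hk
    · rintro z ⟨x, y, rfl⟩
      exact ⟨uceMk φ SK 1 (SK.alpha x) (SK.alpha y), by rw [uK_mk, one_smul]⟩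
    · exact ⟨0, uK0⟩
    · rintro x y - - ⟨ξ, hξ⟩ ⟨η, hη⟩
      exact ⟨ξ + η, by rw [uK_add, hξ, hη]⟩
    · rintro a x - ⟨ξ, hξ⟩
      exact ⟨a • ξ, by rw [uK_smul, hξ]⟩
  -- compatibility of uK with the structures
  have uKal : ∀ ξ : UCE φ SK, uK (UK.alpha ξ) = SK.alpha (uK ξ) := by
    intro ξ
    refine uce_ind φ SK (p := fun ξ => uK (UK.alpha ξ) = SK.alpha (uK ξ)) ?_ ?_ ?_ ξ
    · show uK (UK.alpha 0) = SK.alpha (uK 0)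
      rw [hlr_alpha_zero, uK0, hlr_alpha_zero]
    · intro a x y
      show uK (UK.alpha (uceMk φ SK a x y)) = SK.alpha (uK (uceMk φ SK a x y))
      rw [UK_al, uK_mk, uK_mk, SK.alpha_smulA, SK.alpha_bracket]
    · intro ξ η h1 h2
      show uK (UK.alpha (ξ + η)) = SK.alpha (uK (ξ + η))
      rw [UK.alpha_add, uK_add, uK_add, SK.alpha_add]
      rw [show uK (UK.alpha ξ) = SK.alpha (uK ξ) from h1,
        show uK (UK.alpha η) = SK.alpha (uK η) from h2]
  have uKrho : ∀ (ξ : UCE φ SK) (b : A), SK.rho (uK ξ) b = UK.rho ξ b := by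
    intro ξ
    refine uce_ind φ SK (p := fun ξ => ∀ b, SK.rho (uK ξ) b = UK.rho ξ b) ?_ ?_ ?_ ξ
    · intro b
      show SK.rho (uK 0) b = UK.rho 0 b
      rw [uK0, hlr_rho_zero, hlr_rho_zero]
    · intro a x y b
      show SK.rho (uK (uceMk φ SK a x y)) b = UK.rho (uceMk φ SK a x y) b
      rw [uK_mk, SK.rho_smulA, UK_rho]
    · intro ξ η h1 h2 b
      show SK.rho (uK (ξ + η)) b = UK.rho (ξ + η) b
      rw [uK_add, SK.rho_add_left, UK.rho_add_left, h1 b, h2 b]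
  have uKbr : ∀ ξ η : UCE φ SK, uK (UK.bracket ξ η) = SK.bracket (uK ξ) (uK η) := by
    intro ξ
    refine uce_ind φ SK (p := fun ξ => ∀ η, uK (UK.bracket ξ η)
      = SK.bracket (uK ξ) (uK η)) ?_ ?_ ?_ ξ
    · intro η
      show uK (UK.bracket 0 η) = SK.bracket (uK 0) (uK η)
      rw [hlr_br_zero_left, uK0, hlr_br_zero_left]
    · intro a₁ x₁ y₁ η
      refine uce_ind φ SK (p := fun η => uK (UK.bracket (uceMk φ SK a₁ x₁ y₁) η)
        = SK.bracket (uK (uceMk φ SK a₁ x₁ y₁)) (uK η)) ?_ ?_ ?_ η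
      · show uK (UK.bracket (uceMk φ SK a₁ x₁ y₁) 0)
          = SK.bracket (uK (uceMk φ SK a₁ x₁ y₁)) (uK 0)
        rw [hlr_br_zero_right, uK0, hlr_br_zero_right]
      · intro a₂ x₂ y₂
        show uK (UK.bracket (uceMk φ SK a₁ x₁ y₁) (uceMk φ SK a₂ x₂ y₂))
          = SK.bracket (uK (uceMk φ SK a₁ x₁ y₁)) (uK (uceMk φ SK a₂ x₂ y₂))
        rw [UK_br, uK_sub, uK_add, uK_mk, uK_mk, uK_mk, uK_mk, uK_mk,
          hlr_br_smul_smul, SK.alpha_bracket, SK.alpha_bracket]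
      · intro η₁ η₂ h1 h2
        show uK (UK.bracket (uceMk φ SK a₁ x₁ y₁) (η₁ + η₂))
          = SK.bracket (uK (uceMk φ SK a₁ x₁ y₁)) (uK (η₁ + η₂))
        rw [UK.add_right, uK_add, uK_add, SK.add_right]
        rw [show uK (UK.bracket (uceMk φ SK a₁ x₁ y₁) η₁)
            = SK.bracket (uK (uceMk φ SK a₁ x₁ y₁)) (uK η₁) from h1,
          show uK (UK.bracket (uceMk φ SK a₁ x₁ y₁) η₂)
            = SK.bracket (uK (uceMk φ SK a₁ x₁ y₁)) (uK η₂) from h2]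
    · intro ξ₁ ξ₂ h1 h2 η
      show uK (UK.bracket (ξ₁ + ξ₂) η) = SK.bracket (uK (ξ₁ + ξ₂)) (uK η)
      rw [UK.add_left, uK_add, uK_add, SK.add_left, h1 η, h2 η]
  -- membership in P
  have hPmem : ∀ ξ : UCE φ SK, uK ξ = 0 → F ξ ∈ P := by
    intro ξ h
    rw [hP]
    exact ⟨ξ, h, rfl⟩
  have hPrev : ∀ p ∈ P, ∃ ξ, uK ξ = 0 ∧ F ξ = p := by
    intro p hp
    rw [hP] at hp
    obtain ⟨ξ, hξ, rfl⟩ := hp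
    exact ⟨ξ, hξ, rfl⟩
  refine ⟨⟨?_, ?_⟩, ?_⟩
  · -- existence of a lift implies invariance of P
    rintro ⟨DK, ⟨hDKd, hDKc⟩, -⟩
    obtain ⟨DK_add, DK_rsmul, -, -, -, DK_al, DK_br, -, DK_smulA, -⟩ := hDKd
    have DK0 : DK 0 = 0 := addhom_zero DK DK_add
    have Tlem : ∀ ξ η : UCE φ SK, F η = DLu (F ξ) → uK η = DK (uK ξ) := by
      intro ξ
      refine uce_ind φ SK
        (p := fun ξ => ∀ η, F η = DLu (F ξ) → uK η = DK (uK ξ)) ?_ ?_ ?_ ξ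
      · intro η h
        rw [F0, DLu0] at h
        rw [kerF _ h, uK0, DK0]
      · intro a x y η h
        set η₀ := uceMk φ SK (σD a) (SK.alpha x) (SK.alpha y)
          + uceMk φ SK (φ a) (DK x) (SK.alpha y)
          + uceMk φ SK (φ a) (SK.alpha x) (DK y) with hη₀def
        have hη₀ : F η₀ = DLu (F (uceMk φ SK a x y)) := by
          rw [hη₀def, F_add, F_add, F_mk, F_mk, F_mk, f_al, f_al, hDKc, hDKc,
            F_mk, hDLuf]
        have h3 : F (η - η₀) = 0 := by rw [F_sub, h, hη₀, sub_self]
        have h4 := kerF _ h3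
        rw [uK_sub, sub_eq_zero] at h4
        rw [h4, hη₀def, uK_add, uK_add, uK_mk, uK_mk, uK_mk, uK_mk, DK_smulA,
          DK_br, SK.alpha_bracket, smul_add]
        abel
      · intro ξ₁ ξ₂ ih1 ih2 η h
        obtain ⟨η₁, h₁⟩ := F_surj (DLu (F ξ₁))
        obtain ⟨η₂, h₂⟩ := F_surj (DLu (F ξ₂))
        have h3 : F (η - (η₁ + η₂)) = 0 := by
          rw [F_sub, h, F_add ξ₁ ξ₂, F_add η₁ η₂, h₁, h₂, DLu_add, sub_self]
        have h4 := kerF _ h3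
        rw [uK_sub, sub_eq_zero] at h4
        rw [h4, uK_add, ih1 _ h₁, ih2 _ h₂, uK_add, ← DK_add]
    rintro q ⟨p, hp, rfl⟩
    obtain ⟨ξ, hξ, rfl⟩ := hPrev p hp
    obtain ⟨η, hη⟩ := F_surj (DLu (F ξ))
    have h0 : uK η = 0 := by rw [Tlem ξ η hη, hξ, DK0]
    rw [← hη]
    exact hPmem η h0
  · -- invariance of P implies existence and uniqueness of a lift
    intro hsub
    choose ξ0 hξ0 using uK_surj
    choose η0 hη0 using fun k => F_surj (DLu (F (ξ0 k)))
    set DK : K → K := fun k => uK (η0 k) with hDKdef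
    have INV : ∀ (ξ η : UCE φ SK), F η = DLu (F ξ) → DK (uK ξ) = uK η := by
      intro ξ η hη
      have h1 : uK (ξ - ξ0 (uK ξ)) = 0 := by rw [uK_sub, hξ0, sub_self]
      have h2 : DLu (F (ξ - ξ0 (uK ξ))) ∈ P := hsub ⟨_, hPmem _ h1, rfl⟩
      obtain ⟨ζ, hζ0, hζ⟩ := hPrev _ h2
      have h3 : F (η - η0 (uK ξ) - ζ) = 0 := by
        rw [F_sub, F_sub, hη, hη0, hζ, F_sub, DLu_sub, sub_self]
      have h4 := kerF _ h3
      rw [uK_sub, uK_sub, hζ0, sub_zero, sub_eq_zero] at h4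
      exact h4.symm
    have wit : ∀ k : K, uK (ξ0 k) = k := hξ0
    have DK_comm : ∀ k, f (DK k) = DL (f k) := by
      intro k
      calc f (uK (η0 k)) = uL (F (η0 k)) := fuK _
        _ = uL (DLu (F (ξ0 k))) := by rw [hη0]
        _ = DL (uL (F (ξ0 k))) := uLD _
        _ = DL (f (uK (ξ0 k))) := by rw [fuK]
        _ = DL (f k) := by rw [hξ0]
    have DK_add : ∀ k₁ k₂, DK (k₁ + k₂) = DK k₁ + DK k₂ := by
      intro k₁ k₂
      have h := INV (ξ0 k₁ + ξ0 k₂) (η0 k₁ + η0 k₂)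
        (by rw [F_add, hη0, hη0, F_add, DLu_add])
      rw [uK_add, hξ0, hξ0, uK_add] at h
      exact h
    have DK_rsmul : ∀ (r : R) (k : K), DK (r • k) = r • DK k := by
      intro r k
      have h := INV (r • ξ0 k) (r • η0 k)
        (by rw [F_rsmul, hη0, F_rsmul, DLu_smulR])
      rw [uK_rsmul, hξ0, uK_rsmul] at h
      exact h
    have DK_al : ∀ k, DK (SK.alpha k) = SK.alpha (DK k) := by
      intro k
      have h := INV (UK.alpha (ξ0 k)) (UK.alpha (η0 k))
        (by rw [F_al, F_al, hη0, DLu_al])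
      rw [uKal, hξ0, uKal] at h
      exact h
    have DK_smulA : ∀ (a : A) (k : K), DK (a • k) = φ a • DK k + σD a • SK.alpha k := by
      intro a k
      have h := INV (a • ξ0 k) (φ a • η0 k + σD a • UK.alpha (ξ0 k))
        (by rw [F_add, F_smul, F_smul, F_al, hη0, F_smul, DLu_smulA])
      rw [uK_smul, hξ0, uK_add, uK_smul, uK_smul, uKal, hξ0] at h
      exact h
    have DK_br : ∀ k₁ k₂, DK (SK.bracket k₁ k₂)
        = SK.bracket (DK k₁) (SK.alpha k₂) + SK.bracket (SK.alpha k₁) (DK k₂) := by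
      intro k₁ k₂
      have h := INV (UK.bracket (ξ0 k₁) (ξ0 k₂))
        (UK.bracket (η0 k₁) (UK.alpha (ξ0 k₂)) + UK.bracket (UK.alpha (ξ0 k₁)) (η0 k₂))
        (by rw [F_add, F_br, F_br, F_al, F_al, F_br, hη0, hη0, DLu_br])
      rw [uKbr, hξ0, hξ0, uK_add, uKbr, uKbr, uKal, uKal, hξ0, hξ0] at h
      exact h
    have DK_rho : ∀ (k : K) (a : A),
        σD (SK.rho k a) = SK.rho (SK.alpha k) (σD a) + SK.rho (DK k) (φ a) := by
      intro k a
      calc σD (SK.rho k a) = σD (UL.rho (F (ξ0 k)) a) := by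
            rw [F_rho, ← uKrho, hξ0]
        _ = UL.rho (UL.alpha (F (ξ0 k))) (σD a) + UL.rho (DLu (F (ξ0 k))) (φ a) :=
            DLu_rho _ _
        _ = SK.rho (SK.alpha k) (σD a) + SK.rho (DK k) (φ a) := by
            rw [← F_al, ← hη0, F_rho, F_rho, ← uKrho, ← uKrho, uKal, hξ0]
    refine ⟨DK, ⟨⟨DK_add, DK_rsmul, sD_add, sD_smulR, sD_mul, DK_al, DK_br,
      sD_phi, DK_smulA, DK_rho⟩, DK_comm⟩, ?_⟩
    rintro DK' ⟨⟨d'_add, -, -, -, -, -, d'_br, -, d'_smulA, -⟩, hc'⟩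
    funext k
    show DK' k = DK k
    have hE : ∀ z : K, f (DK' z - DK z) = 0 := by
      intro z
      rw [f_sub, hc', DK_comm, sub_self]
    have key : ∀ z : K, DK' z = DK z := by
      intro z
      have hz : z ∈ Submodule.span A
          {w : K | ∃ x y, w = SK.bracket (SK.alpha x) (SK.alpha y)} := by
        rw [hap]; exact Submodule.mem_top
      refine Submodule.span_induction (p := fun w _ => DK' w = DK w) ?_ ?_ ?_ ?_ hz
      · rintro w ⟨x, y, rfl⟩
        show DK' (SK.bracket (SK.alpha x) (SK.alpha y))
          = DK (SK.bracket (SK.alpha x) (SK.alpha y))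
        rw [d'_br, DK_br]
        have e1 : SK.bracket (DK' (SK.alpha x)) (SK.alpha (SK.alpha y))
            = SK.bracket (DK (SK.alpha x)) (SK.alpha (SK.alpha y)) := by
          rw [← sub_eq_zero, ← hlr_br_sub_left]
          exact (cent _ (hE (SK.alpha x)) _).1
        have e2 : SK.bracket (SK.alpha (SK.alpha x)) (DK' (SK.alpha y))
            = SK.bracket (SK.alpha (SK.alpha x)) (DK (SK.alpha y)) := by
          rw [← sub_eq_zero, ← hlr_br_sub_right]
          exact (cent _ (hE (SK.alpha y)) _).2
        rw [e1, e2]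
      · show DK' (0 : K) = DK 0
        rw [addhom_zero DK' d'_add, addhom_zero DK DK_add]
      · intro x y _ _ h1 h2
        show DK' (x + y) = DK (x + y)
        rw [d'_add, DK_add, show DK' x = DK x from h1, show DK' y = DK y from h2]
      · intro a x _ h1
        show DK' (a • x) = DK (a • x)
        rw [d'_smulA, DK_smulA, show DK' x = DK x from h1]
    exact key k
  · -- any lift preserves the kernel of f
    intro DK _ hcomm k hk
    rw [hcomm k, hk, DL0]
end
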